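/- Let 𝕋 be a time scale, a,b ∈ 𝕋, a < b, g : [a,b]∩𝕋 → ℝ strictly increasing, and f : [a,b]∩𝕋 → ℝ strictly increasing. Then ∫ₐᵇ f Δg ≤ ∫ₐᵇ f ∇g (the delta Riemann–Stieltjes integral is at most the nabla one), whenever both exist. -/

import Mathlib

open Set Filter

noncomputable section

/-- Backward jump operator of a time scale `T`. -/
def tsRho (T : Set ℝ) (t : ℝ) : ℝ := sSup {s ∈ T | s < t}

/-- Forward jump operator of a time scale `T`. -/
def tsSigma (T : Set ℝ) (t : ℝ) : ℝ := sInf {s ∈ T | t < s}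

/-- A partition `a = t₀ < t₁ < ⋯ < tₙ = b` of `[a,b] ∩ T` by points of `T`. -/
structure TSPartition (T : Set ℝ) (a b : ℝ) where
  n : ℕ
  t : ℕ → ℝ
  npos : 0 < n
  mem : ∀ j ≤ n, t j ∈ T
  first : t 0 = a
  last : t n = b
  mono : ∀ j < n, t j < t (j + 1)

/-- Upper Darboux–Stieltjes delta sum `U_Δ(P, f, g)`. -/
def upperSumD (T : Set ℝ) (f g : ℝ → ℝ) {a b : ℝ} (P : TSPartition T a b) : ℝ :=
  ∑ j ∈ Finset.range P.n,
    sSup (f '' (Set.Icc (P.t j) (tsRho T (P.t (j + 1))) ∩ T)) * (g (P.t (j + 1)) - g (P.t j))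

/-- Lower Darboux–Stieltjes delta sum `L_Δ(P, f, g)`. -/
def lowerSumD (T : Set ℝ) (f g : ℝ → ℝ) {a b : ℝ} (P : TSPartition T a b) : ℝ :=
  ∑ j ∈ Finset.range P.n,
    sInf (f '' (Set.Icc (P.t j) (tsRho T (P.t (j + 1))) ∩ T)) * (g (P.t (j + 1)) - g (P.t j))

/-- Upper Darboux–Stieltjes nabla sum `U_∇(P, f, g)`. -/
def upperSumN (T : Set ℝ) (f g : ℝ → ℝ) {a b : ℝ} (P : TSPartition T a b) : ℝ :=
  ∑ j ∈ Finset.range P.n,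
    sSup (f '' (Set.Icc (tsSigma T (P.t j)) (P.t (j + 1)) ∩ T)) * (g (P.t (j + 1)) - g (P.t j))

/-- Lower Darboux–Stieltjes nabla sum `L_∇(P, f, g)`. -/
def lowerSumN (T : Set ℝ) (f g : ℝ → ℝ) {a b : ℝ} (P : TSPartition T a b) : ℝ :=
  ∑ j ∈ Finset.range P.n,
    sInf (f '' (Set.Icc (tsSigma T (P.t j)) (P.t (j + 1)) ∩ T)) * (g (P.t (j + 1)) - g (P.t j))

/-- Upper Darboux–Stieltjes delta integral. -/
def upperIntD (T : Set ℝ) (a b : ℝ) (f g : ℝ → ℝ) : ℝ :=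
  sInf (Set.range fun P : TSPartition T a b => upperSumD T f g P)

/-- Lower Darboux–Stieltjes delta integral. -/
def lowerIntD (T : Set ℝ) (a b : ℝ) (f g : ℝ → ℝ) : ℝ :=
  sSup (Set.range fun P : TSPartition T a b => lowerSumD T f g P)

/-- Upper Darboux–Stieltjes nabla integral. -/
def upperIntN (T : Set ℝ) (a b : ℝ) (f g : ℝ → ℝ) : ℝ :=
  sInf (Set.range fun P : TSPartition T a b => upperSumN T f g P)

/-- Lower Darboux–Stieltjes nabla integral. -/
def lowerIntN (T : Set ℝ) (a b : ℝ) (f g : ℝ → ℝ) : ℝ :=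
  sSup (Set.range fun P : TSPartition T a b => lowerSumN T f g P)

/-- `f` is Riemann–Stieltjes delta integrable with respect to `g` on `[a,b] ∩ T`. -/
def RSDeltaIntegrable (T : Set ℝ) (a b : ℝ) (f g : ℝ → ℝ) : Prop :=
  lowerIntD T a b f g = upperIntD T a b f g

/-- The Riemann–Stieltjes delta integral `∫ₐᵇ f Δg`. -/
def RSDeltaIntegral (T : Set ℝ) (a b : ℝ) (f g : ℝ → ℝ) : ℝ := upperIntD T a b f g

/-- `f` is Riemann–Stieltjes nabla integrable with respect to `g` on `[a,b] ∩ T`. -/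
def RSNablaIntegrable (T : Set ℝ) (a b : ℝ) (f g : ℝ → ℝ) : Prop :=
  lowerIntN T a b f g = upperIntN T a b f g

/-- The Riemann–Stieltjes nabla integral `∫ₐᵇ f ∇g`. -/
def RSNablaIntegral (T : Set ℝ) (a b : ℝ) (f g : ℝ → ℝ) : ℝ := upperIntN T a b f g
lemma TSPartition.t_le (T : Set ℝ) {a b : ℝ} (P : TSPartition T a b) :
    ∀ {i j : ℕ}, i ≤ j → j ≤ P.n → P.t i ≤ P.t j := by
  intro i j hij hjn
  induction j with
  | zero => simp [Nat.le_zero.mp hij]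
  | succ k ih =>
    rcases Nat.lt_or_ge i (k + 1) with h | h
    · exact le_trans (ih (Nat.lt_succ_iff.mp h) (le_trans (Nat.le_succ k) hjn))
        (P.mono k (by omega)).le
    · have : i = k + 1 := le_antisymm hij h
      simp [this]

lemma TSPartition.t_mem_Icc (T : Set ℝ) {a b : ℝ} (P : TSPartition T a b) {j : ℕ}
    (hj : j ≤ P.n) : P.t j ∈ Set.Icc a b ∩ T := by
  refine ⟨⟨?_, ?_⟩, P.mem j hj⟩
  · have h := P.t_le T (Nat.zero_le j) hj; rwa [P.first] at h
  · have h := P.t_le T hj le_rfl; rwa [P.last] at h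

lemma tsSigma_spec (T : Set ℝ) (hT : IsClosed T) {u v : ℝ} (hu : u ∈ T) (hv : v ∈ T)
    (huv : u < v) : tsSigma T u ∈ T ∧ u ≤ tsSigma T u ∧ tsSigma T u ≤ v := by
  have hne : ({s ∈ T | u < s} : Set ℝ).Nonempty := ⟨v, hv, huv⟩
  have hbd : BddBelow {s ∈ T | u < s} := ⟨u, fun x hx => hx.2.le⟩
  refine ⟨?_, le_csInf hne fun x hx => hx.2.le, csInf_le hbd ⟨hv, huv⟩⟩
  have h1 : sInf {s ∈ T | u < s} ∈ closure {s ∈ T | u < s} := csInf_mem_closure hne hbd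
  have h2 : closure {s ∈ T | u < s} ⊆ T := by
    calc closure {s ∈ T | u < s} ⊆ closure T := closure_mono (fun x hx => hx.1)
    _ = T := hT.closure_eq
  exact h2 h1

lemma lowerD_le_lowerN (T : Set ℝ) (hT : IsClosed T) {a b : ℝ} (ha : a ∈ T) (hb : b ∈ T)
    (hab : a < b) (f g : ℝ → ℝ) (hf : StrictMonoOn f (Set.Icc a b ∩ T))
    (hg : StrictMonoOn g (Set.Icc a b ∩ T)) (P : TSPartition T a b) :
    lowerSumD T f g P ≤ lowerSumN T f g P := by
  apply Finset.sum_le_sum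
  intro j hj
  rw [Finset.mem_range] at hj
  set u := P.t j with hu_def
  set v := P.t (j + 1) with hv_def
  have huT : u ∈ T := P.mem j hj.le
  have hvT : v ∈ T := P.mem (j + 1) hj
  have huv : u < v := P.mono j hj
  have huI : u ∈ Set.Icc a b ∩ T := P.t_mem_Icc T hj.le
  have hvI : v ∈ Set.Icc a b ∩ T := P.t_mem_Icc T hj
  have hd : 0 ≤ g v - g u := sub_nonneg.2 (hg.monotoneOn huI hvI huv.le)
  have hρ_le : tsRho T v ≤ v := csSup_le ⟨u, huT, huv⟩ (fun x hx => hx.2.le)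
  have hu_ρ : u ≤ tsRho T v := le_csSup ⟨v, fun x hx => hx.2.le⟩ ⟨huT, huv⟩
  obtain ⟨hσT, hu_σ, hσ_v⟩ := tsSigma_spec T hT huT hvT huv
  have hσI : tsSigma T u ∈ Set.Icc a b ∩ T := ⟨⟨huI.1.1.trans hu_σ, hσ_v.trans hvI.1.2⟩, hσT⟩
  have hDsub : Set.Icc u (tsRho T v) ∩ T ⊆ Set.Icc a b ∩ T := fun x hx =>
    ⟨⟨huI.1.1.trans hx.1.1, (hx.1.2.trans hρ_le).trans hvI.1.2⟩, hx.2⟩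
  have hNsub : Set.Icc (tsSigma T u) v ∩ T ⊆ Set.Icc a b ∩ T := fun x hx =>
    ⟨⟨hσI.1.1.trans hx.1.1, hx.1.2.trans hvI.1.2⟩, hx.2⟩
  have hDbdd : BddBelow (f '' (Set.Icc u (tsRho T v) ∩ T)) := by
    refine ⟨f a, ?_⟩
    rintro y ⟨x, hx, rfl⟩
    exact hf.monotoneOn ⟨⟨le_refl a, hab.le⟩, ha⟩ (hDsub hx) (hDsub hx).1.1
  have h1 : sInf (f '' (Set.Icc u (tsRho T v) ∩ T)) ≤ f u :=
    csInf_le hDbdd ⟨u, ⟨⟨le_refl u, hu_ρ⟩, huT⟩, rfl⟩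
  have h2 : f (tsSigma T u) ≤ sInf (f '' (Set.Icc (tsSigma T u) v ∩ T)) := by
    refine le_csInf ⟨f v, v, ⟨⟨hσ_v, le_refl v⟩, hvT⟩, rfl⟩ ?_
    rintro y ⟨x, hx, rfl⟩
    exact hf.monotoneOn hσI (hNsub hx) hx.1.1
  have h3 : f u ≤ f (tsSigma T u) := hf.monotoneOn huI hσI hu_σ
  exact mul_le_mul_of_nonneg_right (h1.trans (h3.trans h2)) hd

lemma lowerN_le_const (T : Set ℝ) (hT : IsClosed T) {a b : ℝ} (ha : a ∈ T) (hb : b ∈ T)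
    (hab : a < b) (f g : ℝ → ℝ) (hf : StrictMonoOn f (Set.Icc a b ∩ T))
    (hg : StrictMonoOn g (Set.Icc a b ∩ T)) (P : TSPartition T a b) :
    lowerSumN T f g P ≤ f b * (g b - g a) := by
  have key : ∀ j ∈ Finset.range P.n,
      sInf (f '' (Set.Icc (tsSigma T (P.t j)) (P.t (j + 1)) ∩ T)) * (g (P.t (j + 1)) - g (P.t j))
        ≤ f b * (g (P.t (j + 1)) - g (P.t j)) := by
    intro j hj
    rw [Finset.mem_range] at hj
    set u := P.t j
    set v := P.t (j + 1)
    have huT : u ∈ T := P.mem j hj.le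
    have hvT : v ∈ T := P.mem (j + 1) hj
    have huv : u < v := P.mono j hj
    have huI : u ∈ Set.Icc a b ∩ T := P.t_mem_Icc T hj.le
    have hvI : v ∈ Set.Icc a b ∩ T := P.t_mem_Icc T hj
    have hd : 0 ≤ g v - g u := sub_nonneg.2 (hg.monotoneOn huI hvI huv.le)
    obtain ⟨hσT, hu_σ, hσ_v⟩ := tsSigma_spec T hT huT hvT huv
    have hσI : tsSigma T u ∈ Set.Icc a b ∩ T := ⟨⟨huI.1.1.trans hu_σ, hσ_v.trans hvI.1.2⟩, hσT⟩
    have hNsub : Set.Icc (tsSigma T u) v ∩ T ⊆ Set.Icc a b ∩ T := fun x hx =>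
      ⟨⟨hσI.1.1.trans hx.1.1, hx.1.2.trans hvI.1.2⟩, hx.2⟩
    have hNbdd : BddBelow (f '' (Set.Icc (tsSigma T u) v ∩ T)) := by
      refine ⟨f a, ?_⟩
      rintro y ⟨x, hx, rfl⟩
      exact hf.monotoneOn ⟨⟨le_refl a, hab.le⟩, ha⟩ (hNsub hx) (hNsub hx).1.1
    have h1 : sInf (f '' (Set.Icc (tsSigma T u) v ∩ T)) ≤ f v :=
      csInf_le hNbdd ⟨v, ⟨⟨hσ_v, le_refl v⟩, hvT⟩, rfl⟩
    have h2 : f v ≤ f b := hf.monotoneOn hvI ⟨⟨hab.le, le_refl b⟩, hb⟩ hvI.1.2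
    exact mul_le_mul_of_nonneg_right (h1.trans h2) hd
  calc lowerSumN T f g P ≤ ∑ j ∈ Finset.range P.n, f b * (g (P.t (j + 1)) - g (P.t j)) :=
        Finset.sum_le_sum key
    _ = f b * ∑ j ∈ Finset.range P.n, (g (P.t (j + 1)) - g (P.t j)) := by rw [Finset.mul_sum]
    _ = f b * (g b - g a) := by
        rw [Finset.sum_range_sub (fun j => g (P.t j)), P.first, P.last]

def trivPartition (T : Set ℝ) {a b : ℝ} (ha : a ∈ T) (hb : b ∈ T) (hab : a < b) :
    TSPartition T a b where
  n := 1
  t := fun j => if j = 0 then a else b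
  npos := one_pos
  mem := by intro j _; split <;> [exact ha; exact hb]
  first := by simp
  last := by simp
  mono := by
    intro j hj
    interval_cases j
    simpa using hab

/-- For strictly increasing `f`, the delta integral is at most the nabla integral. -/
theorem statement9 (T : Set ℝ) (hT : IsClosed T) (a b : ℝ) (ha : a ∈ T) (hb : b ∈ T)
    (hab : a < b) (f g : ℝ → ℝ)
    (hg : StrictMonoOn g (Set.Icc a b ∩ T))
    (hf : StrictMonoOn f (Set.Icc a b ∩ T))
    (hD : RSDeltaIntegrable T a b f g) (hN : RSNablaIntegrable T a b f g) :
    RSDeltaIntegral T a b f g ≤ RSNablaIntegral T a b f g := by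
  have hnonempty : Nonempty (TSPartition T a b) := ⟨trivPartition T ha hb hab⟩
  have hbddN : BddAbove (Set.range fun P : TSPartition T a b => lowerSumN T f g P) := by
    refine ⟨f b * (g b - g a), ?_⟩
    rintro x ⟨P, rfl⟩
    exact lowerN_le_const T hT ha hb hab f g hf hg P
  show upperIntD T a b f g ≤ upperIntN T a b f g
  rw [← hD, ← hN]
  unfold lowerIntD lowerIntN
  refine csSup_le (Set.range_nonempty _) ?_
  rintro x ⟨P, rfl⟩
  exact (lowerD_le_lowerN T hT ha hb hab f g hf hg P).trans (le_csSup hbddN ⟨P, rfl⟩)
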